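/- Let G be a simple graph with non-adjacent distinguished vertices m₁, m₂ such that G + m₁m₂ is 3-vertex-connected, and let vw be an edge of G with v, w ∉ {m₁, m₂}. Then for each i ∈ {1,2} there exists a path from mᵢ to v in G that avoids the vertex w and avoids the other distinguished vertex m_{3−i}. -/
import Mathlib


/-- `G` with the extra edge `a b` added. -/
def addEdge {V : Type*} (G : SimpleGraph V) (a b : V) : SimpleGraph V :=
  G ⊔ SimpleGraph.fromEdgeSet {s(a, b)}

/-- `G` is `k`-vertex-connected: more than `k` vertices and deleting any fewer
than `k` vertices leaves the graph connected. -/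
def KConn {V : Type*} [Fintype V] [DecidableEq V] (G : SimpleGraph V) (k : ℕ) : Prop :=
  k < Fintype.card V ∧
    ∀ S : Finset V, S.card < k → (G.induce ((↑S : Set V)ᶜ)).Connected

lemma addEdge_comm {V : Type*} (G : SimpleGraph V) (a b : V) :
    addEdge G a b = addEdge G b a := by
  unfold addEdge
  rw [Sym2.eq_swap]

lemma key {V : Type*} [Fintype V] [DecidableEq V]
    (G : SimpleGraph V) (m₁ m₂ : V) (hne : m₁ ≠ m₂)
    (h3 : KConn (addEdge G m₁ m₂) 3)
    (v w : V) (hvw : G.Adj v w)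
    (hv₁ : v ≠ m₁) (hv₂ : v ≠ m₂) (hw₁ : w ≠ m₁) :
    ∃ p : G.Walk m₁ v, p.IsPath ∧ w ∉ p.support ∧ m₂ ∉ p.support := by
  set S : Finset V := {w, m₂} with hS
  have hcard : S.card < 3 := lt_of_le_of_lt (Finset.card_insert_le _ _) (by simp)
  have hconn := h3.2 S hcard
  set s : Set V := ((↑S : Set V)ᶜ) with hs
  have hmem : ∀ x : V, x ∈ s ↔ x ≠ w ∧ x ≠ m₂ := by
    intro x; simp [hs, hS, not_or]
  have heq : (addEdge G m₁ m₂).induce s = G.induce s := by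
    ext a b
    simp only [SimpleGraph.comap_adj, addEdge, SimpleGraph.sup_adj,
      SimpleGraph.fromEdgeSet_adj, Set.mem_singleton_iff]
    constructor
    · rintro (h | ⟨h, -⟩)
      · exact h
      · exfalso
        rcases Sym2.eq_iff.mp h with ⟨-, h2⟩ | ⟨h2, -⟩
        · exact ((hmem b).mp b.2).2 h2
        · exact ((hmem a).mp a.2).2 h2
    · exact fun h => Or.inl h
  rw [heq] at hconn
  have hm₁ : m₁ ∈ s := (hmem m₁).mpr ⟨hw₁.symm, hne⟩
  have hv : v ∈ s := (hmem v).mpr ⟨hvw.ne, hv₂⟩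
  obtain ⟨q⟩ := hconn.preconnected ⟨m₁, hm₁⟩ ⟨v, hv⟩
  let q' := q.map (SimpleGraph.Embedding.induce s).toHom
  refine ⟨q'.bypass, q'.bypass_isPath, ?_, ?_⟩
  · intro h
    have := q'.support_bypass_subset h
    simp only [q', SimpleGraph.Walk.support_map, List.mem_map] at this
    obtain ⟨x, -, hx⟩ := this
    exact ((hmem _).mp x.2).1 hx
  · intro h
    have := q'.support_bypass_subset h
    simp only [q', SimpleGraph.Walk.support_map, List.mem_map] at this
    obtain ⟨x, -, hx⟩ := this
    exact ((hmem _).mp x.2).2 hx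

theorem stmt_9 {V : Type*} [Fintype V] [DecidableEq V]
    (G : SimpleGraph V) (m₁ m₂ : V) (hne : m₁ ≠ m₂) (hnadj : ¬ G.Adj m₁ m₂)
    (h3 : KConn (addEdge G m₁ m₂) 3)
    (v w : V) (hvw : G.Adj v w)
    (hv₁ : v ≠ m₁) (hv₂ : v ≠ m₂) (hw₁ : w ≠ m₁) (hw₂ : w ≠ m₂) :
    (∃ p : G.Walk m₁ v, p.IsPath ∧ w ∉ p.support ∧ m₂ ∉ p.support) ∧
    (∃ p : G.Walk m₂ v, p.IsPath ∧ w ∉ p.support ∧ m₁ ∉ p.support) := by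
  refine ⟨key G m₁ m₂ hne h3 v w hvw hv₁ hv₂ hw₁, ?_⟩
  rw [addEdge_comm] at h3
  exact key G m₂ m₁ hne.symm h3 v w hvw hv₂ hv₁ hw₂
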